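/- Let M : (\mathbb{C}^\mathbb{N})^m \to \mathbb{C}^\mathbb{N} be the m-linear operator M(x_{1-m},...,x_0) = [x_{1-m}]_1 \cdots [x_{-1}]_1 \cdot B(x_0), where B is the backward shift and [x]_1 denotes the first coordinate. Then for every n \geq 1 the n-th orbit element satisfies M^{[n]}(x_{1-m},...,x_0) = c_n \cdot B^n(x_0), where c_n is a scalar depending only on [x_{1-m}]_1,...,[x_{-1}]_1 and the first n-1 coordinates of x_0. -/
import Mathlib

noncomputable def cAux (m : ℕ) (a : Fin m → ℂ) (w : ℕ → ℂ) : ℕ → ℂ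
  | 0 => 1
  | 1 => ∏ i, a i
  | n + 2 =>
      (∏ i : Fin m,
        if h : n + 1 + (i : ℕ) < m then a ⟨n + 1 + (i : ℕ), h⟩
        else if n + 1 + (i : ℕ) = m then w 0
        else cAux m a w (n + 1 + (i : ℕ) - m) * w (n + 1 + (i : ℕ) - m)) *
      cAux m a w (n + 1)
  termination_by n => n
  decreasing_by
  · have := i.isLt; omega
  · omega

lemma cAux_congr (m : ℕ) (a : Fin m → ℂ) :
    ∀ n (w w' : ℕ → ℂ), (∀ j, j + 1 < n → w j = w' j) → cAux m a w n = cAux m a w' n := by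
  intro n
  induction n using Nat.strong_induction_on with
  | _ n ih =>
    match n with
    | 0 => intro w w' _; simp only [cAux]
    | 1 => intro w w' _; simp only [cAux]
    | n + 2 =>
      intro w w' hw
      rw [cAux, cAux]
      congr 1
      · refine Finset.prod_congr rfl fun i _ => ?_
        have hi := i.isLt
        split_ifs with h1 h2
        · rfl
        · exact hw 0 (by omega)
        · rw [ih _ (by omega) w w' (fun j hj => hw j (by omega)), hw _ (by omega)]
      · exact ih (n + 1) (by omega) w w' (fun j hj => hw j (by omega))

theorem stmt_7 {m : ℕ}
    (M : (Fin (m + 1) → (ℕ → ℂ)) → (ℕ → ℂ))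
    (hM : ∀ v, M v = (∏ i : Fin m, v i.castSucc 0) • fun j => v (Fin.last m) (j + 1)) :
    ∃ c : (Fin m → ℂ) → (ℕ → ℂ) → ℕ → ℂ,
      (∀ (a : Fin m → ℂ) (w w' : ℕ → ℂ) (n : ℕ), 1 ≤ n →
        (∀ j : ℕ, j + 1 < n → w j = w' j) → c a w n = c a w' n) ∧
      (∀ x : ℕ → (ℕ → ℂ),
        (∀ k : ℕ, x (k + (m + 1)) = M (fun i : Fin (m + 1) => x (k + (i : ℕ)))) →
        ∀ n : ℕ, 1 ≤ n →
          x (m + n) =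
            c (fun i : Fin m => x (i : ℕ) 0) (x m) n • fun j => x m (j + n)) := by
  refine ⟨cAux m, fun a w w' n _ h => cAux_congr m a n w w' h, ?_⟩
  intro x hx
  set a : Fin m → ℂ := fun i => x (i : ℕ) 0 with ha
  set w : ℕ → ℂ := x m with hw
  intro n
  induction n using Nat.strong_induction_on with
  | _ n ih =>
    match n with
    | 0 => intro h; omega
    | 1 =>
      intro _
      have h0 := hx 0
      rw [hM] at h0
      simp only [zero_add] at h0
      rw [h0]
      rw [show cAux m a w 1 = ∏ i, a i by simp only [cAux]]
      congr 1
    | n + 2 =>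
      intro _
      have hkey := hx (n + 1)
      rw [hM] at hkey
      have hprev : x (m + (n + 1)) = cAux m a w (n + 1) • fun j => w (j + (n + 1)) :=
        ih (n + 1) (by omega) (by omega)
      rw [show m + (n + 2) = (n + 1) + (m + 1) by omega, hkey]
      rw [cAux]
      funext j
      simp only [Pi.smul_apply, smul_eq_mul, Fin.val_last]
      have hlast : x (n + 1 + m) (j + 1) = cAux m a w (n + 1) * w (j + 1 + (n + 1)) := by
        rw [show n + 1 + m = m + (n + 1) by omega, hprev]
        simp [smul_eq_mul]
      rw [hlast]
      have hprod : (∏ i : Fin m, x (n + 1 + (i.castSucc : ℕ)) 0) =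
          ∏ i : Fin m,
            if h : n + 1 + (i : ℕ) < m then a ⟨n + 1 + (i : ℕ), h⟩
            else if n + 1 + (i : ℕ) = m then w 0
            else cAux m a w (n + 1 + (i : ℕ) - m) * w (n + 1 + (i : ℕ) - m) := by
        refine Finset.prod_congr rfl fun i _ => ?_
        have hi := i.isLt
        rw [Fin.coe_castSucc]
        split_ifs with h1 h2
        · rfl
        · rw [h2]
        · have hk : x (m + (n + 1 + (i : ℕ) - m)) =
              cAux m a w (n + 1 + (i : ℕ) - m) •
                fun j => w (j + (n + 1 + (i : ℕ) - m)) :=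
            ih _ (by omega) (by omega)
          rw [show n + 1 + (i : ℕ) = m + (n + 1 + (i : ℕ) - m) by omega, hk]
          simp [smul_eq_mul]
      rw [hprod]
      rw [show j + 1 + (n + 1) = j + (n + 2) by omega]
      ring
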